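/- Let n ∈ ℕ, w : Fin n → ℕ, s = Σ_{i<n} w(i), and t ≤ s. Over the alphabet {0,1}, let block(v) = 0^v 1 0^{s−v}, let P be the concatenation of 2^n copies of block(t), and let T be the concatenation, over x = 0, 1, …, 2^n − 1 in order, of block(x̄·w̄). Then HD(P, T) < 2^{n+1} if and only if there exist x₁, …, xₙ ∈ {0,1} with Σ_{i<n} xᵢ·w(i) = t (i.e. the Subset Sum instance (w, t) has a positive answer). -/

import Mathlib

/-- `block s v = 0^v 1 0^(s−v)`, a string of length `s + 1` over `{0,1}` (as `Bool`). -/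
def block (s v : ℕ) : List Bool :=
  List.replicate v false ++ [true] ++ List.replicate (s - v) false

/-- `x̄·w̄ = Σ_{i<n} (i-th binary digit of x)·w(i)`. -/
def dotw (n : ℕ) (w : Fin n → ℕ) (x : ℕ) : ℕ :=
  ∑ i : Fin n, if Nat.testBit x i.val then w i else 0

/-- Hamming distance between two strings (of equal length): the number of
indices at which they differ. -/
def HD (A B : List Bool) : ℕ :=
  ((Finset.range A.length).filter (fun i => A[i]? ≠ B[i]?)).card

lemma block_length (s v : ℕ) (hv : v ≤ s) : (block s v).length = s + 1 := by
  simp [block]; omega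

lemma block_getElem? (s v i : ℕ) (hv : v ≤ s) (hi : i ≤ s) :
    (block s v)[i]? = some (decide (i = v)) := by
  unfold block
  rcases lt_trichotomy i v with h | h | h
  · rw [List.getElem?_append_left (by simp; omega),
      List.getElem?_append_left (by simpa using h), List.getElem?_replicate]
    simp [h, Nat.ne_of_lt h]
  · subst h
    rw [List.getElem?_append_left (by simp), List.getElem?_append_right (by simp)]
    simp
  · rw [List.getElem?_append_right (by simp; omega), List.getElem?_replicate]
    simp only [List.length_append, List.length_replicate, List.length_cons,
      List.length_nil]
    rw [if_pos (by omega)]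
    simp [Nat.ne_of_gt h]

lemma HD_append (A B C D : List Bool) (h : A.length = B.length) :
    HD (A ++ C) (B ++ D) = HD A B + HD C D := by
  unfold HD
  rw [List.length_append, Finset.range_add, Finset.filter_union, Finset.filter_map,
    Finset.card_union_of_disjoint, Finset.card_map]
  · congr 1
    · apply congrArg Finset.card
      apply Finset.filter_congr
      intro i hi
      simp only [Finset.mem_range] at hi
      rw [List.getElem?_append_left hi, List.getElem?_append_left (h ▸ hi)]
    · apply congrArg Finset.card
      apply Finset.filter_congr
      intro i _
      simp only [Function.comp_apply, addLeftEmbedding_apply]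
      rw [List.getElem?_append_right (Nat.le_add_right _ _),
        List.getElem?_append_right (h ▸ Nat.le_add_right _ _)]
      rw [Nat.add_sub_cancel_left, h, Nat.add_sub_cancel_left]
  · rw [Finset.disjoint_left]
    intro i hi hi'
    have h1 : i < A.length := Finset.mem_range.1 (Finset.mem_filter.1 hi).1
    obtain ⟨j, _, hj⟩ := Finset.mem_map.1 hi'
    rw [addLeftEmbedding_apply] at hj
    omega

lemma HD_flatten {L M : List (List Bool)}
    (h : List.Forall₂ (fun a b => a.length = b.length) L M) :
    HD L.flatten M.flatten = (List.zipWith HD L M).sum := by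
  induction h with
  | nil => simp [HD]
  | cons h _ ih =>
    simp only [List.flatten_cons, List.zipWith_cons_cons, List.sum_cons,
      HD_append _ _ _ _ h, ih]

lemma HD_block (s t v : ℕ) (ht : t ≤ s) (hv : v ≤ s) :
    HD (block s t) (block s v) = if v = t then 0 else 2 := by
  unfold HD
  rw [block_length s t ht]
  by_cases h : v = t
  · subst h; simp
  · rw [if_neg h]
    have key : (Finset.range (s + 1)).filter
        (fun i => (block s t)[i]? ≠ (block s v)[i]?) = {t, v} := by
      ext i
      simp only [Finset.mem_filter, Finset.mem_range, Finset.mem_insert,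
        Finset.mem_singleton]
      constructor
      · rintro ⟨hi, hne⟩
        rw [block_getElem? s t i ht (by omega), block_getElem? s v i hv (by omega)] at hne
        by_contra hc
        push_neg at hc
        simp [hc.1, hc.2] at hne
      · have hne : t ≠ v := fun hh => h hh.symm
        rintro (h1 | h1)
        · refine ⟨by omega, ?_⟩
          rw [h1, block_getElem? s t t ht (by omega), block_getElem? s v t hv (by omega)]
          simp [hne]
        · refine ⟨by omega, ?_⟩
          rw [h1, block_getElem? s t v ht (by omega), block_getElem? s v v hv (by omega)]
          simp [h]
    rw [key, Finset.card_pair (fun hh => h hh.symm)]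

lemma sum_two_pow (a : ℕ) : ∑ i ∈ Finset.range a, 2 ^ i = 2 ^ a - 1 := by
  induction a with
  | zero => simp
  | succ a ih =>
    rw [Finset.sum_range_succ, ih]
    have h1 : 1 ≤ 2 ^ a := Nat.one_le_two_pow
    have h2 : 2 ^ (a + 1) = 2 ^ a * 2 := pow_succ 2 a
    omega

lemma testBit_sum_pow (S : Finset ℕ) (j : ℕ) :
    (∑ i ∈ S, 2 ^ i).testBit j = decide (j ∈ S) := by
  induction S using Finset.induction_on_max with
  | empty => simp
  | insert a S ha ih =>
    have hnotmem : a ∉ S := fun hmem => lt_irrefl a (ha a hmem)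
    have hlt : ∑ i ∈ S, 2 ^ i < 2 ^ a := by
      calc ∑ i ∈ S, 2 ^ i ≤ ∑ i ∈ Finset.range a, 2 ^ i :=
            Finset.sum_le_sum_of_subset (fun i hi => Finset.mem_range.2 (ha i hi))
        _ < 2 ^ a := by have := Nat.one_le_two_pow (n := a); rw [sum_two_pow]; omega
    rw [Finset.sum_insert hnotmem]
    rcases lt_trichotomy j a with h | rfl | h
    · rw [Nat.testBit_two_pow_add_gt h, ih]
      simp [Finset.mem_insert, Nat.ne_of_lt h]
    · rw [Nat.testBit_two_pow_add_eq, ih]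
      simp [hnotmem]
    · have hbig : 2 ^ a + ∑ i ∈ S, 2 ^ i < 2 ^ j := by
        calc 2 ^ a + ∑ i ∈ S, 2 ^ i < 2 ^ a + 2 ^ a := by omega
          _ = 2 ^ (a + 1) := by rw [pow_succ]; ring
          _ ≤ 2 ^ j := Nat.pow_le_pow_right (by norm_num) h
      rw [Nat.testBit_eq_false_of_lt hbig]
      have hj1 : j ≠ a := Nat.ne_of_gt h
      have hj2 : j ∉ S := fun hmem => absurd (ha j hmem) (by omega)
      simp [hj1, hj2]

lemma dotw_le (n : ℕ) (w : Fin n → ℕ) (x : ℕ) : dotw n w x ≤ ∑ i, w i := by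
  apply Finset.sum_le_sum
  intro i _
  split <;> simp

lemma exists_dotw_iff (n : ℕ) (w : Fin n → ℕ) (t : ℕ) :
    (∃ x ∈ Finset.range (2 ^ n), dotw n w x = t) ↔
      ∃ x : Fin n → ℕ, (∀ i, x i = 0 ∨ x i = 1) ∧ ∑ i, x i * w i = t := by
  constructor
  · rintro ⟨x, _, hx⟩
    refine ⟨fun i => if Nat.testBit x i.val then 1 else 0,
      fun i => by by_cases hb : Nat.testBit x i.val <;> simp [hb], ?_⟩
    rw [← hx]
    unfold dotw
    apply Finset.sum_congr rfl
    intro i _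
    by_cases hb : Nat.testBit x i.val <;> simp [hb]
  · rintro ⟨y, hy, hsum⟩
    set S : Finset ℕ := (Finset.univ.filter (fun i => y i = 1)).map
      ⟨Fin.val, Fin.val_injective⟩ with hS
    have hSsub : ∀ j ∈ S, j < n := by
      intro j hj
      simp only [hS, Finset.mem_map, Function.Embedding.coeFn_mk] at hj
      obtain ⟨i, _, rfl⟩ := hj
      exact i.isLt
    refine ⟨∑ i ∈ S, 2 ^ i, ?_, ?_⟩
    · rw [Finset.mem_range]
      calc ∑ i ∈ S, 2 ^ i ≤ ∑ i ∈ Finset.range n, 2 ^ i :=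
            Finset.sum_le_sum_of_subset (fun i hi => Finset.mem_range.2 (hSsub i hi))
        _ < 2 ^ n := by have := Nat.one_le_two_pow (n := n); rw [sum_two_pow]; omega
    · rw [← hsum]
      unfold dotw
      apply Finset.sum_congr rfl
      intro i _
      rw [testBit_sum_pow]
      have hmem : (i.val ∈ S) ↔ y i = 1 := by
        simp only [hS, Finset.mem_map, Finset.mem_filter, Finset.mem_univ, true_and,
          Function.Embedding.coeFn_mk]
        constructor
        · rintro ⟨j, hj, hval⟩
          rwa [Fin.val_injective hval] at hj
        · intro h; exact ⟨i, h, rfl⟩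
      by_cases h : y i = 1
      · simp [hmem, h]
      · rcases hy i with h0 | h1
        · simp [hmem, h, h0]
        · exact absurd h1 h

/-- `HD(P, T) < 2^{n+1}` iff the Subset Sum instance `(w, t)` has a positive answer. -/
theorem stmt_14 (n : ℕ) (w : Fin n → ℕ) (t : ℕ) (ht : t ≤ ∑ i, w i) :
    HD ((List.replicate (2 ^ n) (block (∑ i, w i) t)).flatten)
        (((List.range (2 ^ n)).map fun x => block (∑ i, w i) (dotw n w x)).flatten) <
        2 ^ (n + 1) ↔
      ∃ x : Fin n → ℕ, (∀ i, x i = 0 ∨ x i = 1) ∧ ∑ i, x i * w i = t := by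
  set s := ∑ i, w i with hs
  have hrep : List.replicate (2 ^ n) (block s t) =
      (List.range (2 ^ n)).map (fun _ => block s t) := by
    rw [List.map_const', List.length_range]
  have hforall : List.Forall₂ (fun a b => a.length = b.length)
      ((List.range (2 ^ n)).map (fun _ => block s t))
      ((List.range (2 ^ n)).map fun x => block s (dotw n w x)) := by
    rw [List.forall₂_map_left_iff, List.forall₂_map_right_iff]
    apply List.forall₂_same.2
    intro x _
    rw [block_length s t ht, block_length s (dotw n w x) (dotw_le n w x)]
  rw [hrep, HD_flatten hforall, List.zipWith_map, List.zipWith_self]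
  have hsum : ((List.range (2 ^ n)).map
      (fun x => HD (block s t) (block s (dotw n w x)))).sum =
      ∑ x ∈ Finset.range (2 ^ n), if dotw n w x = t then 0 else 2 := by
    rw [show ((List.range (2 ^ n)).map
        (fun x => HD (block s t) (block s (dotw n w x)))).sum =
        ∑ x ∈ Finset.range (2 ^ n), HD (block s t) (block s (dotw n w x)) from rfl]
    apply Finset.sum_congr rfl
    intro x _
    rw [HD_block s t (dotw n w x) ht (dotw_le n w x)]
  rw [hsum, Finset.sum_ite, Finset.sum_const_zero, Finset.sum_const, smul_eq_mul, zero_add]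
  rw [← exists_dotw_iff n w t]
  have hcard_le : ((Finset.range (2 ^ n)).filter (fun x => ¬ dotw n w x = t)).card ≤ 2 ^ n := by
    calc _ ≤ (Finset.range (2 ^ n)).card := Finset.card_filter_le _ _
      _ = 2 ^ n := Finset.card_range _
  constructor
  · intro h
    by_contra hno
    push_neg at hno
    have : (Finset.range (2 ^ n)).filter (fun x => ¬ dotw n w x = t) =
        Finset.range (2 ^ n) := by
      apply Finset.filter_eq_self.2
      intro x hx
      exact fun he => hno x hx he
    rw [this, Finset.card_range] at h
    rw [pow_succ] at h
    omega
  · rintro ⟨x, hx, hxe⟩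
    have hne : (Finset.range (2 ^ n)).filter (fun x => ¬ dotw n w x = t) ≠
        Finset.range (2 ^ n) := by
      intro heq
      have := Finset.filter_eq_self.1 heq x hx
      exact this hxe
    have hlt : ((Finset.range (2 ^ n)).filter (fun x => ¬ dotw n w x = t)).card < 2 ^ n := by
      rcases lt_or_eq_of_le hcard_le with h | h
      · exact h
      · exfalso
        apply hne
        apply Finset.eq_of_subset_of_card_le (Finset.filter_subset _ _)
        rw [Finset.card_range, h]
    rw [pow_succ]
    omega
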